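/- arXiv:1707.01852 — 2 statements merged into one kernel-verified Lean document; each statement's English description precedes it below -/
import Mathlib

section
/- Let ℋ be a finite-dimensional complex Hilbert space, a > 0, and let H : (−a,a) → B(ℋ), P : (−a,a) → B(ℋ), and E : (−a,a) → ℝ be maps, all differentiable at 0, such that for every α ∈ (−a,a): H(α) is self-adjoint, P(α) is an orthogonal projection (P(α)² = P(α) = P(α)*), and H(α)P(α) = E(α)P(α). Assume further that P(0) is the orthogonal projection onto ker(H(0)−E(0)), and let R be the reduced resolvent of H(0) at E(0). Then P(0)·H′(0)·R = −P′(0)·(1 − P(0)), where H′(0) and P′(0) denote the derivatives at 0. -/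
open scoped BigOperators ComplexConjugate

noncomputable section

variable {ℋ : Type*} [NormedAddCommGroup ℋ] [InnerProductSpace ℂ ℋ] [FiniteDimensional ℂ ℋ]

/-- The orthogonal projection onto a subspace `K`, as an operator on `ℋ`. -/
noncomputable def orthProj (K : Submodule ℂ ℋ) : ℋ →L[ℂ] ℋ :=
  K.subtypeL.comp (K.orthogonalProjectionOnto)

/-- The spectral projection of `H` associated with a set `S ⊆ ℝ`: the orthogonal projection
onto the span of all eigenvectors of `H` with eigenvalue in `S`. -/
noncomputable def spectralProj (H : ℋ →L[ℂ] ℋ) (S : Set ℝ) : ℋ →L[ℂ] ℋ :=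
  orthProj (⨆ μ ∈ S, Module.End.eigenspace (H : ℋ →ₗ[ℂ] ℋ) (μ : ℂ))

/-- An operator `A` is off-diagonal with respect to a projection `P` if `PAP = 0` and
`(1−P)A(1−P) = 0`. -/
def IsOffDiagonal (P A : ℋ →L[ℂ] ℋ) : Prop :=
  P * A * P = 0 ∧ (1 - P) * A * (1 - P) = 0

/-- perturbation identity of Corollary 4.1. Given differentiable-at-`0`
families `H(α)` (self-adjoint), `P(α)` (orthogonal projections), `E(α)` (reals) on `(−a,a)`
with `H(α)P(α) = E(α)P(α)`, where `P(0)` is the orthogonal projection onto `ker(H(0)−E(0))`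
with reduced resolvent `R`, one has `P(0)·H′(0)·R = −P′(0)·(1 − P(0))`. -/
theorem statement17 (a : ℝ) (ha : 0 < a)
    (H P : ℝ → (ℋ →L[ℂ] ℋ)) (E : ℝ → ℝ)
    (H' P' : ℋ →L[ℂ] ℋ) (E' : ℝ)
    (hH_diff : HasDerivAt H H' 0) (hP_diff : HasDerivAt P P' 0) (hE_diff : HasDerivAt E E' 0)
    (hH_sa : ∀ α ∈ Set.Ioo (-a) a, IsSelfAdjoint (H α))
    (hP_idem : ∀ α ∈ Set.Ioo (-a) a, P α * P α = P α)
    (hP_sa : ∀ α ∈ Set.Ioo (-a) a, IsSelfAdjoint (P α))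
    (hHP : ∀ α ∈ Set.Ioo (-a) a, H α * P α = (E α : ℂ) • P α)
    (hP0 : P 0 = orthProj (LinearMap.ker (((H 0 - (E 0 : ℂ) • 1 : ℋ →L[ℂ] ℋ) : ℋ →ₗ[ℂ] ℋ))))
    (R : ℋ →L[ℂ] ℋ)
    (hRP : R * P 0 = 0) (hPR : P 0 * R = 0)
    (hR1 : R * (H 0 - (E 0 : ℂ) • 1) = 1 - P 0)
    (hR2 : (H 0 - (E 0 : ℂ) • 1) * R = 1 - P 0) :
    P 0 * H' * R = -(P' * (1 - P 0)) := by
  have hmem : Set.Ioo (-a) a ∈ nhds (0 : ℝ) :=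
    Ioo_mem_nhds (by linarith) ha
  have hPH : ∀ α ∈ Set.Ioo (-a) a, P α * H α = (E α : ℂ) • P α := by
    intro α hα
    have h := congrArg star (hHP α hα)
    rwa [star_mul, star_smul, (hP_sa α hα).star_eq, (hH_sa α hα).star_eq,
      Complex.star_def, Complex.conj_ofReal] at h
  have hg : HasDerivAt (fun α => P α * H α) (P' * H 0 + P 0 * H') 0 :=
    hP_diff.mul hH_diff
  have hEc : HasDerivAt (fun α => (E α : ℂ)) (E' : ℂ) 0 := hE_diff.ofReal_comp
  have hf : HasDerivAt (fun α => (E α : ℂ) • P α) ((E 0 : ℂ) • P' + (E' : ℂ) • P 0) 0 :=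
    hEc.smul hP_diff
  have hEq : (fun α => P α * H α) =ᶠ[nhds (0 : ℝ)] (fun α => (E α : ℂ) • P α) :=
    Filter.eventuallyEq_of_mem hmem hPH
  have key : P' * H 0 + P 0 * H' = (E 0 : ℂ) • P' + (E' : ℂ) • P 0 :=
    hg.unique (hf.congr_of_eventuallyEq hEq)
  have key2 := congrArg (· * R) key
  simp only [add_mul, smul_mul_assoc, hPR, smul_zero, add_zero] at key2
  have hmain : P 0 * H' * R = -(P' * (H 0 - (E 0 : ℂ) • 1) * R) := by
    rw [mul_assoc, mul_assoc] at key2 ⊢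
    rw [sub_mul, smul_mul_assoc, one_mul, mul_sub, mul_smul_comm]
    linear_combination (norm := abel) key2
  rw [hmain, mul_assoc, hR2]
end
end

section
/- Let ℋ be a finite-dimensional complex Hilbert space and let P : ℝ → B(ℋ) be continuously differentiable with P(t)² = P(t) and P(t)* = P(t) for all t ∈ ℝ. Define Kato's generator K(t) := i·[P′(t), P(t)]. Fix s ∈ ℝ and let U : ℝ → B(ℋ) be differentiable with U(s) = 1 and i·U′(t) = K(t)·U(t) for all t ∈ ℝ. Then U(t)·P(s) = P(t)·U(t) for all t ∈ ℝ; that is, the parallel transport intertwines the spectral projections at different times. -/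
open scoped BigOperators ComplexConjugate

noncomputable section

variable {ℋ : Type*} [NormedAddCommGroup ℋ] [InnerProductSpace ℂ ℋ] [FiniteDimensional ℂ ℋ]

/-- intertwining property (3.6) of Kato's parallel transport. If
`P : ℝ → B(ℋ)` is continuously differentiable with `P(t)² = P(t) = P(t)*`, `K(t) := i[P′(t),P(t)]`
is Kato's generator, and `U` solves `i U′(t) = K(t) U(t)`, `U(s) = 1`, then
`U(t) P(s) = P(t) U(t)` for all `t`. -/
theorem statement18 (P : ℝ → (ℋ →L[ℂ] ℋ)) (P' : ℝ → (ℋ →L[ℂ] ℋ))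
    (hP_deriv : ∀ t : ℝ, HasDerivAt P (P' t) t) (hP'_cont : Continuous P')
    (hP_idem : ∀ t : ℝ, P t * P t = P t) (hP_sa : ∀ t : ℝ, IsSelfAdjoint (P t))
    (s : ℝ) (U : ℝ → (ℋ →L[ℂ] ℋ)) (hUs : U s = 1)
    (hU : ∀ t : ℝ, HasDerivAt U
      ((-Complex.I) • ((Complex.I • (P' t * P t - P t * P' t)) * U t)) t) :
    ∀ t : ℝ, U t * P s = P t * U t := by
  intro t
  set A : ℝ → (ℋ →L[ℂ] ℋ) := fun τ => P' τ * P τ - P τ * P' τ with hA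
  -- Leibniz identity from differentiating P² = P
  have hLeib : ∀ τ : ℝ, P' τ = P' τ * P τ + P τ * P' τ := by
    intro τ
    have h1 : HasDerivAt (fun x => P x * P x) (P' τ * P τ + P τ * P' τ) τ :=
      (hP_deriv τ).mul (hP_deriv τ)
    have hfun : (fun x => P x * P x) = P := funext hP_idem
    rw [hfun] at h1
    exact (hP_deriv τ).unique h1
  have hPPP : ∀ τ : ℝ, P τ * P' τ * P τ = 0 := by
    intro τ
    have h := hLeib τ
    have h2 : P τ * P' τ * P τ
        = P τ * P' τ * (P τ * P τ) + (P τ * (P τ * P' τ)) * P τ := by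
      conv_lhs => rw [show P' τ = P' τ * P τ + P τ * P' τ from h]
      noncomm_ring
    rw [hP_idem] at h2
    have h3 : P τ * (P τ * P' τ) = P τ * P' τ := by
      rw [← mul_assoc, hP_idem]
    rw [h3] at h2
    nth_rewrite 1 [← add_zero (P τ * P' τ * P τ)] at h2
    exact (add_left_cancel h2).symm
  have key : ∀ τ : ℝ, A τ * P τ - P τ * A τ = P' τ := by
    intro τ
    have h := hLeib τ
    have h0 := hPPP τ
    have e1 : A τ * P τ = P' τ * P τ - P τ * P' τ * P τ := by
      rw [hA]; simp only [sub_mul, mul_assoc, hP_idem]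
    have e2 : P τ * A τ = P τ * P' τ * P τ - P τ * P' τ := by
      rw [hA]
      rw [mul_sub, ← mul_assoc, ← mul_assoc]
      congr 1
      rw [hP_idem]
    rw [e1, e2, h0]
    rw [sub_zero, zero_sub, sub_neg_eq_add, ← h]
  have hPc : Continuous P := continuous_iff_continuousAt.2 fun τ => (hP_deriv τ).continuousAt
  have hA_cont : Continuous A := (hP'_cont.mul hPc).sub (hPc.mul hP'_cont)
  have hU' : ∀ τ : ℝ, HasDerivAt U (A τ * U τ) τ := by
    intro τ
    have h := hU τ
    convert h using 1
    rw [smul_mul_assoc, smul_smul]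
    simp [Complex.I_mul_I]
    rfl
  set f : ℝ → (ℋ →L[ℂ] ℋ) := fun τ => U τ * P s - P τ * U τ with hfdef
  have hf' : ∀ τ : ℝ, HasDerivAt f (A τ * f τ) τ := by
    intro τ
    have h1 : HasDerivAt f
        ((A τ * U τ) * P s - (P' τ * U τ + P τ * (A τ * U τ))) τ :=
      ((hU' τ).mul_const (P s)).sub ((hP_deriv τ).mul (hU' τ))
    convert h1 using 1
    have hk : A τ * P τ = P' τ + P τ * A τ := by
      have := key τ; linear_combination (norm := noncomm_ring) this
    calc A τ * f τ = A τ * U τ * P s - (A τ * P τ) * U τ := by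
          rw [hfdef]; noncomm_ring
      _ = A τ * U τ * P s - (P' τ * U τ + P τ * (A τ * U τ)) := by
          rw [hk]; noncomm_ring
  -- ODE uniqueness
  set a : ℝ := min s t - 1 with ha
  set b : ℝ := max s t + 1 with hb
  have hab : a ≤ b := by
    have := min_le_max (a := s) (b := t); dsimp [a, b]; linarith
  set c : ℝ → ℝ := fun τ => min (max τ a) b with hc
  have hcmem : ∀ τ, c τ ∈ Set.Icc a b := by
    intro τ
    constructor
    · exact le_min (le_max_right _ _) hab
    · exact min_le_right _ _
  obtain ⟨C, hC⟩ := (isCompact_Icc : IsCompact (Set.Icc a b)).exists_bound_of_continuousOn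
    hA_cont.continuousOn
  set K : NNReal := ⟨max C 0, le_max_right _ _⟩ with hK
  set v : ℝ → (ℋ →L[ℂ] ℋ) → (ℋ →L[ℂ] ℋ) := fun τ x => A (c τ) * x with hv
  have hvlip : ∀ τ, LipschitzWith K (v τ) := by
    intro τ
    apply LipschitzWith.of_dist_le_mul
    intro x y
    rw [dist_eq_norm, dist_eq_norm, hv]
    simp only [← mul_sub]
    calc ‖A (c τ) * (x - y)‖ ≤ ‖A (c τ)‖ * ‖x - y‖ := norm_mul_le _ _
      _ ≤ (K : ℝ) * ‖x - y‖ := by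
          apply mul_le_mul_of_nonneg_right _ (norm_nonneg _)
          exact le_trans (hC _ (hcmem τ)) (le_max_left _ _)
  have hsmem : s ∈ Set.Ioo a b := by
    constructor
    · have : min s t ≤ s := min_le_left _ _
      dsimp [a]; linarith
    · have : s ≤ max s t := le_max_left _ _
      dsimp [b]; linarith
  have htmem : t ∈ Set.Ioo a b := by
    constructor
    · have : min s t ≤ t := min_le_right _ _
      dsimp [a]; linarith
    · have : t ≤ max s t := le_max_right _ _
      dsimp [b]; linarith
  have hcid : ∀ τ ∈ Set.Ioo a b, c τ = τ := by
    intro τ hτ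
    rw [hc]
    simp only
    rw [max_eq_left hτ.1.le, min_eq_left hτ.2.le]
  have heq : Set.EqOn f (fun _ => (0 : ℋ →L[ℂ] ℋ)) (Set.Ioo a b) := by
    apply ODE_solution_unique_of_mem_Ioo
      (s := fun _ => (Set.univ : Set (ℋ →L[ℂ] ℋ))) (fun τ _ => (hvlip τ).lipschitzOnWith)
      hsmem
    · intro τ hτ
      refine ⟨?_, trivial⟩
      have : v τ (f τ) = A τ * f τ := by rw [hv]; simp only; rw [hcid τ hτ]
      rw [this]
      exact hf' τ
    · intro τ hτ
      refine ⟨?_, trivial⟩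
      have : v τ (0 : ℋ →L[ℂ] ℋ) = 0 := by rw [hv]; simp
      rw [this]
      exact hasDerivAt_const _ _
    · rw [hfdef]; simp [hUs]
  have := heq htmem
  simp only [hfdef] at this
  exact sub_eq_zero.mp this
end
end
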